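/- Let w be a symmetric K×K real matrix and u ∈ ℝ^{N×K}. For every node i ∈ V, Σ_{e ⊆ V : i ∈ e, 2 ≤ |e| ≤ D} (1/κ_{|e|}) λ_e(u,w) = C · u_i^T w (Σ_{j ∈ V, j ≠ i} u_j) + C' · Σ_{j<m ∈ V : j,m ≠ i} u_j^T w u_m, where C := Σ_{d=2}^D (1/κ_d) binom(N−2, d−2) and C' := Σ_{d=3}^D (1/κ_d) binom(N−3, d−3). (Since the expected weight of hyperedge e under the model is λ_e/κ_e, the left-hand side is the expected weighted degree 𝔼[d_i^w] of node i.) -/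

import Mathlib

open Finset


/-- The bilinear interaction `u_i^T w u_j = Σ_{k,q} u_{ik} w_{kq} u_{jq}`. -/
noncomputable def bilin {N K : ℕ} (u : Fin N → Fin K → ℝ) (w : Fin K → Fin K → ℝ)
    (i j : Fin N) : ℝ :=
  ∑ k, ∑ q, u i k * w k q * u j q

/-- The Poisson mean of a hyperedge: `λ_e(u,w) = Σ_{i<j ∈ e} u_i^T w u_j`. -/
noncomputable def lam {N K : ℕ} (u : Fin N → Fin K → ℝ) (w : Fin K → Fin K → ℝ)
    (e : Finset (Fin N)) : ℝ :=
  ∑ i ∈ e, ∑ j ∈ e, if i < j then bilin u w i j else 0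

lemma bilin_symm {N K : ℕ} (u : Fin N → Fin K → ℝ) (w : Fin K → Fin K → ℝ)
    (hw : ∀ k q, w k q = w q k) (a b : Fin N) : bilin u w a b = bilin u w b a := by
  unfold bilin
  rw [Finset.sum_comm]
  refine Finset.sum_congr rfl fun k _ => Finset.sum_congr rfl fun q _ => ?_
  rw [hw q k]; ring

lemma count_sup {N : ℕ} (s : Finset (Fin N)) (d : ℕ) (hd : s.card ≤ d) :
    ((univ : Finset (Finset (Fin N))).filter (fun e => s ⊆ e ∧ e.card = d)).card
      = (N - s.card).choose (d - s.card) := by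
  have h1 : ((univ : Finset (Finset (Fin N))).filter (fun e => s ⊆ e ∧ e.card = d)).card
      = (sᶜ.powersetCard (d - s.card)).card := by
    apply Finset.card_nbij' (fun e => e \ s) (fun t => t ∪ s)
    · intro e he
      simp only [mem_coe, mem_filter, mem_univ, true_and] at he
      rw [Finset.mem_coe, Finset.mem_powersetCard]
      refine ⟨fun x hx => ?_, ?_⟩
      · rw [Finset.mem_sdiff] at hx
        simpa using hx.2
      · rw [Finset.card_sdiff_of_subset he.1, he.2]
    · intro t ht
      rw [Finset.mem_coe, Finset.mem_powersetCard] at ht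
      have hdisj : Disjoint t s := by
        rw [Finset.disjoint_left]
        intro a ha
        have := ht.1 ha
        simpa using this
      simp only [mem_coe, mem_filter, mem_univ, true_and]
      refine ⟨Finset.subset_union_right, ?_⟩
      rw [Finset.card_union_of_disjoint hdisj, ht.2]
      omega
    · intro e he
      simp only [mem_coe, mem_filter, mem_univ, true_and] at he
      exact Finset.sdiff_union_of_subset he.1
    · intro t ht
      rw [Finset.mem_coe, Finset.mem_powersetCard] at ht
      have hdisj : Disjoint t s := by
        rw [Finset.disjoint_left]
        intro a ha
        have := ht.1 ha
        simpa using this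
      exact Finset.union_sdiff_cancel_right hdisj
  rw [h1, Finset.card_powersetCard, Finset.card_compl, Fintype.card_fin]

lemma count_zero {N : ℕ} (s : Finset (Fin N)) (d : ℕ) (hd : d < s.card) :
    ((univ : Finset (Finset (Fin N))).filter (fun e => s ⊆ e ∧ e.card = d)) = ∅ := by
  rw [Finset.filter_eq_empty_iff]
  rintro e - ⟨hsub, hcard⟩
  have := Finset.card_le_card hsub
  omega

lemma sum_pairs_eq {N : ℕ} (e : Finset (Fin N)) (f : Fin N → Fin N → ℝ) :
    ∑ j, ∑ m, (if j ∈ e ∧ m ∈ e ∧ j < m then f j m else 0)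
      = ∑ j ∈ e, ∑ m ∈ e, if j < m then f j m else 0 := by
  rw [← Finset.sum_subset (Finset.subset_univ e) (fun j _ hj => by simp [hj])]
  refine Finset.sum_congr rfl fun j hj => ?_
  rw [← Finset.sum_subset (Finset.subset_univ e) (fun m _ hm => by simp [hm])]
  exact Finset.sum_congr rfl fun m hm => by simp [hj, hm]

lemma g_eval {N D : ℕ} (κ : ℕ → ℝ) (s : Finset (Fin N)) :
    ∑ e ∈ univ.filter (fun e : Finset (Fin N) => s ⊆ e ∧ 2 ≤ e.card ∧ e.card ≤ D), 1 / κ e.card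
      = ∑ d ∈ Icc 2 D, (1/κ d) *
          ((univ.filter (fun e : Finset (Fin N) => s ⊆ e ∧ e.card = d)).card : ℝ) := by
  rw [← Finset.sum_fiberwise_of_maps_to (g := Finset.card) (t := Icc 2 D)
      (fun e he => by
        simp only [mem_filter, mem_univ, true_and] at he
        rw [Finset.mem_Icc]; exact he.2)]
  refine Finset.sum_congr rfl fun d hd => ?_
  simp only [Finset.mem_Icc] at hd
  have hset : (univ.filter (fun e : Finset (Fin N) => s ⊆ e ∧ 2 ≤ e.card ∧ e.card ≤ D)).filter
      (fun e => e.card = d) = univ.filter (fun e : Finset (Fin N) => s ⊆ e ∧ e.card = d) := by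
    ext e
    simp only [mem_filter, mem_univ, true_and]
    constructor
    · rintro ⟨⟨h1, _⟩, h3⟩; exact ⟨h1, h3⟩
    · rintro ⟨h1, h2⟩; exact ⟨⟨h1, h2 ▸ hd.1, h2 ▸ hd.2⟩, h2⟩
  rw [hset]
  have : ∀ e ∈ univ.filter (fun e : Finset (Fin N) => s ⊆ e ∧ e.card = d),
      1 / κ e.card = 1 / κ d := by
    intro e he
    simp only [mem_filter] at he
    rw [he.2.2]
  rw [Finset.sum_congr rfl this, Finset.sum_const, nsmul_eq_mul, mul_comm]

/-- Expected weighted degree of node `i`: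
`Σ_{e ∋ i, 2 ≤ |e| ≤ D} λ_e(u,w)/κ_{|e|}
  = C · u_i^T w (Σ_{j≠i} u_j) + C' · Σ_{j<m, j,m≠i} u_j^T w u_m`, where
`C = Σ_{d=2}^D (1/κ_d) binom(N−2,d−2)` and `C' = Σ_{d=3}^D (1/κ_d) binom(N−3,d−3)`. -/
theorem stmt_8 {N K D : ℕ} (hN : 2 ≤ N) (hK : 1 ≤ K) (hD2 : 2 ≤ D) (hDN : D ≤ N)
    (κ : ℕ → ℝ) (hκ : ∀ n, 2 ≤ n → n ≤ D → 0 < κ n)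
    (u : Fin N → Fin K → ℝ) (w : Fin K → Fin K → ℝ) (hw : ∀ k q, w k q = w q k)
    (i : Fin N) :
    ∑ e ∈ Finset.univ.filter
        (fun e : Finset (Fin N) => i ∈ e ∧ 2 ≤ e.card ∧ e.card ≤ D),
        (1 / κ e.card) * lam u w e
      = (∑ d ∈ Finset.Icc 2 D, (1 / κ d) * ((N - 2).choose (d - 2) : ℝ))
          * (∑ k, ∑ q, u i k * w k q * ∑ j ∈ Finset.univ.erase i, u j q)
        + (∑ d ∈ Finset.Icc 3 D, (1 / κ d) * ((N - 3).choose (d - 3) : ℝ))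
            * lam u w (Finset.univ.erase i) := by
  classical
  set F := Finset.univ.filter
      (fun e : Finset (Fin N) => i ∈ e ∧ 2 ≤ e.card ∧ e.card ≤ D) with hF
  set C : ℝ := ∑ d ∈ Finset.Icc 2 D, (1 / κ d) * ((N - 2).choose (d - 2) : ℝ) with hC
  set C' : ℝ := ∑ d ∈ Finset.Icc 3 D, (1 / κ d) * ((N - 3).choose (d - 3) : ℝ) with hC'
  -- evaluation of the edge-count generating sums
  have hg : ∀ j m : Fin N, j < m →
      (∑ e ∈ univ.filter (fun e : Finset (Fin N) =>
          (insert i {j, m} : Finset (Fin N)) ⊆ e ∧ 2 ≤ e.card ∧ e.card ≤ D), 1 / κ e.card)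
        = if i = j ∨ i = m then C else C' := by
    intro j m hjm
    rw [g_eval]
    by_cases h2 : i = j ∨ i = m
    · have hcard : (insert i ({j, m} : Finset (Fin N))).card = 2 := by
        have hins : insert i ({j, m} : Finset (Fin N)) = {j, m} := by
          rw [Finset.insert_eq_self]
          rcases h2 with h | h <;> simp [h]
        rw [hins, Finset.card_pair (ne_of_lt hjm)]
      rw [if_pos h2, hC]
      refine Finset.sum_congr rfl fun d hd => ?_
      rw [Finset.mem_Icc] at hd
      rw [count_sup _ _ (by omega : (insert i ({j,m} : Finset (Fin N))).card ≤ d), hcard]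
    · push_neg at h2
      have hcard : (insert i ({j, m} : Finset (Fin N))).card = 3 := by
        rw [Finset.card_insert_of_notMem (by simp [h2.1, h2.2]),
          Finset.card_pair (ne_of_lt hjm)]
      rw [if_neg (by push_neg; exact h2), hC']
      rw [Finset.Icc_eq_cons_Ioc hD2, Finset.sum_cons, ← Finset.Icc_add_one_left_eq_Ioc]
      rw [count_zero _ 2 (by omega)]
      simp only [Finset.card_empty, Nat.cast_zero, mul_zero, zero_add]
      refine Finset.sum_congr rfl fun d hd => ?_
      rw [Finset.mem_Icc] at hd
      rw [count_sup _ _ (by omega : (insert i ({j,m} : Finset (Fin N))).card ≤ d), hcard]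
  have expand : ∀ e : Finset (Fin N), (1 / κ e.card) * lam u w e
      = ∑ j, ∑ m, (if j ∈ e ∧ m ∈ e ∧ j < m then (1 / κ e.card) * bilin u w j m else 0) := by
    intro e
    rw [sum_pairs_eq e (fun j m => (1 / κ e.card) * bilin u w j m), lam, Finset.mul_sum]
    refine Finset.sum_congr rfl fun j _ => ?_
    rw [Finset.mul_sum]
    refine Finset.sum_congr rfl fun m _ => ?_
    split <;> simp
  have step1 : ∑ e ∈ F, (1 / κ e.card) * lam u w e
      = ∑ j, ∑ m, ∑ e ∈ F,
          (if j ∈ e ∧ m ∈ e ∧ j < m then (1 / κ e.card) * bilin u w j m else 0) := by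
    rw [Finset.sum_congr rfl (fun e _ => expand e), Finset.sum_comm]
    exact Finset.sum_congr rfl fun j _ => Finset.sum_comm
  have step2 : ∀ j m : Fin N,
      (∑ e ∈ F, if j ∈ e ∧ m ∈ e ∧ j < m then (1 / κ e.card) * bilin u w j m else 0)
        = if j < m then bilin u w j m * (if i = j ∨ i = m then C else C') else 0 := by
    intro j m
    by_cases hjm : j < m
    · rw [if_pos hjm, ← hg j m hjm, Finset.mul_sum]
      have hA : univ.filter (fun e : Finset (Fin N) =>
          (insert i {j, m} : Finset (Fin N)) ⊆ e ∧ 2 ≤ e.card ∧ e.card ≤ D)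
          = F.filter (fun e => j ∈ e ∧ m ∈ e) := by
        ext e
        simp only [hF, mem_filter, mem_univ, true_and, Finset.insert_subset_iff,
          Finset.singleton_subset_iff]
        tauto
      rw [hA]
      conv_rhs => rw [Finset.sum_filter]
      refine Finset.sum_congr rfl fun e _ => ?_
      by_cases h : j ∈ e ∧ m ∈ e
      · rw [if_pos ⟨h.1, h.2, hjm⟩, if_pos h]
        ring
      · rw [if_neg (by tauto), if_neg h]
    · rw [if_neg hjm]
      refine Finset.sum_eq_zero fun e _ => ?_
      rw [if_neg (by tauto)]
  have split : ∀ j m : Fin N,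
      (if j < m then bilin u w j m * (if i = j ∨ i = m then C else C') else 0)
        = C * (if j < m ∧ (i = j ∨ i = m) then bilin u w j m else 0)
          + C' * (if j ∈ univ.erase i ∧ m ∈ univ.erase i ∧ j < m
              then bilin u w j m else 0) := by
    intro j m
    by_cases h1 : j < m
    · by_cases h2 : i = j ∨ i = m
      · have hne : ¬ (j ∈ univ.erase i ∧ m ∈ univ.erase i ∧ j < m) := by
          rintro ⟨hj, hm, -⟩
          rw [Finset.mem_erase] at hj hm
          rcases h2 with h | h
          · exact hj.1 h.symm
          · exact hm.1 h.symm
        rw [if_pos h1, if_pos h2, if_pos ⟨h1, h2⟩, if_neg hne]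
        ring
      · push_neg at h2
        have hmem : j ∈ univ.erase i ∧ m ∈ univ.erase i ∧ j < m :=
          ⟨Finset.mem_erase.2 ⟨fun hh => h2.1 hh.symm, Finset.mem_univ _⟩,
           Finset.mem_erase.2 ⟨fun hh => h2.2 hh.symm, Finset.mem_univ _⟩, h1⟩
        rw [if_pos h1, if_neg (by tauto), if_neg (by tauto), if_pos hmem]
        ring
    · rw [if_neg h1, if_neg (by tauto), if_neg (by tauto)]
      ring
  -- T1 evaluation
  have hT1 : (∑ j, ∑ m, if j < m ∧ (i = j ∨ i = m) then bilin u w j m else 0)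
      = ∑ j ∈ univ.erase i, bilin u w i j := by
    have hsplit : ∀ j m : Fin N,
        (if j < m ∧ (i = j ∨ i = m) then bilin u w j m else 0)
          = (if i = j then (if j < m then bilin u w j m else 0) else 0)
            + (if i = m then (if j < m ∧ ¬ i = j then bilin u w j m else 0) else 0) := by
      intro j m
      by_cases hij : i = j <;> by_cases him : i = m <;> by_cases hlt : j < m <;>
        simp [hij, him, hlt]
      rw [if_neg (Ne.symm (ne_of_lt hlt)), if_neg (Ne.symm (ne_of_lt hlt))]
      ring
    rw [Finset.sum_congr rfl fun j _ => Finset.sum_congr rfl fun m _ => hsplit j m]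
    rw [Finset.sum_congr rfl fun j (_ : j ∈ univ) => Finset.sum_add_distrib,
      Finset.sum_add_distrib]
    have e1 : (∑ j, ∑ m, if i = j then (if j < m then bilin u w j m else 0) else 0)
        = ∑ m, if i < m then bilin u w i m else 0 := by
      have : ∀ j : Fin N, (∑ m, if i = j then (if j < m then bilin u w j m else 0) else 0)
          = if i = j then (∑ m, if j < m then bilin u w j m else 0) else 0 := by
        intro j
        by_cases hij : i = j <;> simp [hij]
      rw [Finset.sum_congr rfl fun j _ => this j, Finset.sum_ite_eq]
      simp
    have e2 : (∑ j, ∑ m, if i = m then (if j < m ∧ ¬ i = j then bilin u w j m else 0) else 0)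
        = ∑ j, if j < i then bilin u w j i else 0 := by
      refine Finset.sum_congr rfl fun j _ => ?_
      rw [Finset.sum_ite_eq]
      simp only [Finset.mem_univ, if_true]
      by_cases hji : j < i
      · rw [if_pos ⟨hji, fun hh => absurd hh (ne_of_gt hji)⟩, if_pos hji]
      · rw [if_neg (by tauto), if_neg hji]
    rw [e1, e2, ← Finset.sum_add_distrib]
    have : ∀ j : Fin N, ((if i < j then bilin u w i j else 0)
        + (if j < i then bilin u w j i else 0))
        = if j ∈ univ.erase i then bilin u w i j else 0 := by
      intro j
      rcases lt_trichotomy i j with h | h | h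
      · rw [if_pos h, if_neg (asymm h), if_pos (Finset.mem_erase.2 ⟨ne_of_gt h, Finset.mem_univ _⟩)]
        ring
      · simp [h.symm, lt_irrefl]
      · rw [if_neg (asymm h), if_pos h, if_pos (Finset.mem_erase.2 ⟨ne_of_lt h, Finset.mem_univ _⟩),
          bilin_symm u w hw]
        ring
    rw [Finset.sum_congr rfl fun j _ => this j, Finset.sum_ite_mem, Finset.univ_inter]
  -- RHS first factor
  have hfac : (∑ k, ∑ q, u i k * w k q * ∑ j ∈ univ.erase i, u j q)
      = ∑ j ∈ univ.erase i, bilin u w i j := by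
    have h1 : ∀ k : Fin K, (∑ q, u i k * w k q * ∑ j ∈ univ.erase i, u j q)
        = ∑ j ∈ univ.erase i, ∑ q, u i k * w k q * u j q := by
      intro k
      rw [Finset.sum_comm]
      exact Finset.sum_congr rfl fun q _ => Finset.mul_sum _ _ _
    rw [Finset.sum_congr rfl fun k (_ : k ∈ univ) => h1 k, Finset.sum_comm]
    rfl
  -- assemble
  calc ∑ e ∈ F, (1 / κ e.card) * lam u w e
      = ∑ j, ∑ m, (if j < m then bilin u w j m * (if i = j ∨ i = m then C else C') else 0) := by
        rw [step1]
        exact Finset.sum_congr rfl fun j _ => Finset.sum_congr rfl fun m _ => step2 j m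
    _ = C * (∑ j, ∑ m, if j < m ∧ (i = j ∨ i = m) then bilin u w j m else 0)
        + C' * (∑ j, ∑ m, if j ∈ univ.erase i ∧ m ∈ univ.erase i ∧ j < m
            then bilin u w j m else 0) := by
        rw [Finset.sum_congr rfl fun j (_ : j ∈ univ) =>
          Finset.sum_congr rfl fun m _ => split j m]
        rw [Finset.sum_congr rfl fun j (_ : j ∈ univ) => Finset.sum_add_distrib,
          Finset.sum_add_distrib]
        simp only [← Finset.mul_sum]
    _ = C * (∑ k, ∑ q, u i k * w k q * ∑ j ∈ univ.erase i, u j q)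
        + C' * lam u w (univ.erase i) := by
        rw [hT1, hfac, sum_pairs_eq (univ.erase i) (bilin u w)]
        simp only [lam]
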